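/- Let F be as in the CIR model (positive, strictly increasing, strictly convex solution of L u = ru with F(0)=1), and let c_s > 0, y_s = (μθ + r c_s)/(μ + r). Then v(y) = F(y)/F'(y) - (y - c_s) satisfies v(c_s) > 0 and v(y_s) > 0; consequently any root b* of F(b) = (b - c_s)F'(b) satisfies b* > max(c_s, y_s). -/

import Mathlib

theorem bstar_gt_max (μ θ σ r c_s : ℝ) (hμ : 0 < μ) (hθ : 0 < θ) (hσ : 0 < σ) (hr : 0 < r)
    (hcs : 0 < c_s)
    (F : ℝ → ℝ) (hC2 : ContDiff ℝ 2 F)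
    (hFpos : ∀ y, 0 ≤ y → 0 < F y)
    (hF'pos : ∀ y, 0 < y → 0 < deriv F y)
    (hF''pos : ∀ y, 0 < y → 0 < deriv (deriv F) y)
    (hF0 : F 0 = 1)
    (hODE : ∀ y, 0 ≤ y → σ^2 * y / 2 * deriv (deriv F) y + μ * (θ - y) * deriv F y = r * F y)
    (y_s : ℝ) (hys : y_s = (μ * θ + r * c_s) / (μ + r))
    (v : ℝ → ℝ) (hv : ∀ y, v y = F y / deriv F y - (y - c_s))
    (hvanti : StrictAntiOn v (Set.Ioi 0)) :
    0 < v c_s ∧ 0 < v y_s ∧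
    ∀ b : ℝ, 0 < b → F b = (b - c_s) * deriv F b → max c_s y_s < b := by
  have hyspos : 0 < y_s := by
    rw [hys]; positivity
  have hvcs : 0 < v c_s := by
    rw [hv]
    have := hFpos c_s hcs.le
    have := hF'pos c_s hcs
    have : 0 < F c_s / deriv F c_s := by positivity
    linarith
  have hvys : 0 < v y_s := by
    rw [hv]
    have hF' := hF'pos y_s hyspos
    have hF'' := hF''pos y_s hyspos
    have hode := hODE y_s hyspos.le
    -- μ(θ - y_s) = r(y_s - c_s)
    have hrel : μ * (θ - y_s) = r * (y_s - c_s) := by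
      rw [hys]; field_simp; ring
    rw [hrel] at hode
    have hterm : 0 < σ^2 * y_s / 2 * deriv (deriv F) y_s := by positivity
    have hkey : r * (y_s - c_s) * deriv F y_s < r * F y_s := by linarith
    have h2 : (y_s - c_s) * deriv F y_s < F y_s := by nlinarith
    have h3 : y_s - c_s < F y_s / deriv F y_s := by
      rw [lt_div_iff₀ hF']
      linarith [mul_comm (deriv F y_s) (y_s - c_s)]
    linarith
  refine ⟨hvcs, hvys, ?_⟩
  intro b hb hroot
  have hF'b := hF'pos b hb
  have hvb : v b = 0 := by
    rw [hv, hroot]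
    field_simp
    ring
  have hgt : ∀ z : ℝ, 0 < z → 0 < v z → z < b := by
    intro z hz hvz
    by_contra h
    push_neg at h
    rcases lt_or_eq_of_le h with h' | h'
    · have := hvanti (Set.mem_Ioi.mpr hb) (Set.mem_Ioi.mpr hz) h'
      linarith
    · rw [← h'] at hvz; linarith
  exact max_lt (hgt c_s hcs hvcs) (hgt y_s hyspos hvys)
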